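/- Let q be a self-join-free Boolean conjunctive query and F an atom of q with zero indegree in the attack graph of q (no atom attacks F). Let r be a repair of some database, A ∈ r a fact relevant for q in r, B key-equal to A, and r_B = (r \ {A}) ∪ {B}. Then for every valuation ζ over key(F), if r_B ⊨ ζ(q) then r ⊨ ζ(q). -/

import Mathlib

/-- A fact `R(a₁,…,aₙ)`: relation name, primary-key values, non-key values. -/
structure DBFact where
  rel : ℕ
  key : List ℕ
  rest : List ℕ
deriving DecidableEq

/-- Two facts are key-equal if they have the same relation name and primary-key value. -/
def keyEq (A B : DBFact) : Prop := A.rel = B.rel ∧ A.key = B.key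

instance (A B : DBFact) : Decidable (keyEq A B) :=
  inferInstanceAs (Decidable (_ ∧ _))

/-- A set of facts is consistent if it contains no two distinct key-equal facts. -/
def Consistent (s : Finset DBFact) : Prop := ∀ A ∈ s, ∀ B ∈ s, keyEq A B → A = B

/-- A repair of `db` is a maximal (w.r.t. ⊆) consistent subset of `db`. -/
def Repair (db r : Finset DBFact) : Prop :=
  r ⊆ db ∧ Consistent r ∧ ∀ r', r' ⊆ db → Consistent r' → r ⊆ r' → r = r'

/-- A term is a variable (inl) or a constant (inr). -/
abbrev Term := ℕ ⊕ ℕ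

/-- An atom `R(t₁,…,tₙ)` with key positions and non-key positions. -/
structure Atom where
  rel : ℕ
  key : List Term
  rest : List Term
deriving DecidableEq

def termVars (l : List Term) : Finset ℕ := (l.filterMap fun t => t.getLeft?).toFinset

/-- Variables at primary-key positions of an atom. -/
def keyVars (F : Atom) : Finset ℕ := termVars F.key

/-- All variables of an atom. -/
def atomVars (F : Atom) : Finset ℕ := termVars F.key ∪ termVars F.rest

/-- A query (finite set of atoms) is self-join-free: no relation name occurs twice. -/
def SJF (q : Finset Atom) : Prop := ∀ F ∈ q, ∀ G ∈ q, F.rel = G.rel → F = G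

/-- Apply a valuation (total map from variables to constants) to an atom, yielding a fact. -/
def applyVal (θ : ℕ → ℕ) (F : Atom) : DBFact :=
  ⟨F.rel, F.key.map (Sum.elim θ id), F.rest.map (Sum.elim θ id)⟩

/-- Semantic implication of a functional dependency `X → Y` by a set of FDs
(two-tuple semantics, which is equivalent to the standard one for FDs). -/
def FDImplies (fds : Set (Set ℕ × Set ℕ)) (X Y : Set ℕ) : Prop :=
  ∀ θ μ : ℕ → ℕ,
    (∀ p ∈ fds, (∀ v ∈ p.1, θ v = μ v) → ∀ v ∈ p.2, θ v = μ v) →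
    (∀ v ∈ X, θ v = μ v) → ∀ v ∈ Y, θ v = μ v

/-- `FD(q) = { key(F) → vars(F) : F ∈ q }`. -/
def FDs (q : Finset Atom) : Set (Set ℕ × Set ℕ) :=
  {p | ∃ F ∈ q, p = ((keyVars F : Set ℕ), (atomVars F : Set ℕ))}

/-- `F⁺ = { x : FD(q \ {F}) ⊨ key(F) → x }`. -/
def plus (q : Finset Atom) (F : Atom) : Set ℕ :=
  {x | FDImplies (FDs (q.erase F)) (keyVars F : Set ℕ) {x}}

/-- One step of a witness for an attack by `F`: consecutive atoms share a variable outside `F⁺`. -/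
def AttackStep (q : Finset Atom) (F : Atom) (A B : Atom) : Prop :=
  ¬ ((atomVars A ∩ atomVars B : Finset ℕ) : Set ℕ) ⊆ plus q F

/-- `F` attacks `G` in the attack graph of `q`. -/
def Attacks (q : Finset Atom) (F G : Atom) : Prop :=
  F ≠ G ∧ F ∈ q ∧ ∃ L : List Atom, (∀ A ∈ L, A ∈ q) ∧
    List.Chain (AttackStep q F) F L ∧ (F :: L).getLast (List.cons_ne_nil F L) = G

/-- `F` attacks the variable `z`. -/
def AttacksVar (q : Finset Atom) (F : Atom) (z : ℕ) : Prop :=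
  z ∉ plus q F ∧ F ∈ q ∧ ∃ L : List Atom, (∀ A ∈ L, A ∈ q) ∧
    List.Chain (AttackStep q F) F L ∧ z ∈ atomVars ((F :: L).getLast (List.cons_ne_nil F L))

/-- `r ⊨ ζ(q)` for a valuation `ζ` over the variable set `X`. -/
def Sat (r : Finset DBFact) (q : Finset Atom) (X : Finset ℕ) (ζ : ℕ → ℕ) : Prop :=
  ∃ θ : ℕ → ℕ, (∀ v ∈ X, θ v = ζ v) ∧ ∀ F ∈ q, applyVal θ F ∈ r

/-- `r ⊨ q`. -/
def Sat0 (r : Finset DBFact) (q : Finset Atom) : Prop :=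
  ∃ θ : ℕ → ℕ, ∀ F ∈ q, applyVal θ F ∈ r

/-- A fact `A` is relevant for `q` in `r` if `A ∈ θ(q) ⊆ r` for some valuation `θ`. -/
def Relevant (A : DBFact) (q : Finset Atom) (r : Finset DBFact) : Prop :=
  ∃ θ : ℕ → ℕ, (∃ F ∈ q, applyVal θ F = A) ∧ ∀ F ∈ q, applyVal θ F ∈ r


section Aux

lemma mem_termVars {v : ℕ} {l : List Term} : v ∈ termVars l ↔ Sum.inl v ∈ l := by
  simp only [termVars, List.mem_toFinset, List.mem_filterMap]
  constructor
  · rintro ⟨t, ht, h⟩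
    cases t with
    | inl a => simp only [Sum.getLeft?] at h; cases h; exact ht
    | inr b => simp [Sum.getLeft?] at h
  · intro h; exact ⟨Sum.inl v, h, rfl⟩

lemma map_term_congr {θ μ : ℕ → ℕ} {l : List Term}
    (h : ∀ v ∈ termVars l, θ v = μ v) :
    l.map (Sum.elim θ id) = l.map (Sum.elim μ id) := by
  apply List.map_congr_left
  intro t ht
  cases t with
  | inl v => exact h v (mem_termVars.mpr ht)
  | inr c => rfl

lemma agree_of_map_eq {θ μ : ℕ → ℕ} {l : List Term}
    (h : l.map (Sum.elim θ id) = l.map (Sum.elim μ id)) :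
    ∀ v ∈ termVars l, θ v = μ v := by
  intro v hv
  exact List.map_inj_left.mp h (Sum.inl v) (mem_termVars.mp hv)

lemma applyVal_eq_of_agree {θ μ : ℕ → ℕ} {F : Atom}
    (h : ∀ v ∈ atomVars F, θ v = μ v) : applyVal θ F = applyVal μ F := by
  have hk : ∀ v ∈ termVars F.key, θ v = μ v := fun v hv =>
    h v (Finset.mem_union_left _ hv)
  have hr : ∀ v ∈ termVars F.rest, θ v = μ v := fun v hv =>
    h v (Finset.mem_union_right _ hv)
  simp [applyVal, map_term_congr hk, map_term_congr hr]

lemma agree_of_applyVal_eq {θ μ : ℕ → ℕ} {F : Atom}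
    (h : applyVal θ F = applyVal μ F) : ∀ v ∈ atomVars F, θ v = μ v := by
  have h1 : F.key.map (Sum.elim θ id) = F.key.map (Sum.elim μ id) :=
    congrArg DBFact.key h
  have h2 : F.rest.map (Sum.elim θ id) = F.rest.map (Sum.elim μ id) :=
    congrArg DBFact.rest h
  intro v hv
  rcases Finset.mem_union.mp hv with hv | hv
  · exact agree_of_map_eq h1 v hv
  · exact agree_of_map_eq h2 v hv

lemma keyEq_applyVal_of_agree {θ μ : ℕ → ℕ} {F : Atom}
    (h : ∀ v ∈ keyVars F, θ v = μ v) : keyEq (applyVal θ F) (applyVal μ F) :=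
  ⟨rfl, map_term_congr h⟩

lemma agree_of_keyEq_applyVal {θ μ : ℕ → ℕ} {F : Atom}
    (h : keyEq (applyVal θ F) (applyVal μ F)) : ∀ v ∈ keyVars F, θ v = μ v :=
  agree_of_map_eq h.2

lemma keyVars_subset_plus (q : Finset Atom) (F : Atom) :
    ∀ x ∈ keyVars F, (x : ℕ) ∈ plus q F := by
  intro x hx θ μ _ hX v hv
  rw [Set.mem_singleton_iff] at hv
  subst hv
  exact hX v (by exact_mod_cast hx)

lemma chain_concat {α : Type*} {R : α → α → Prop} {a b : α} :
    ∀ {L : List α}, List.Chain R a L → R ((a :: L).getLast (List.cons_ne_nil a L)) b →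
    List.Chain R a (L ++ [b])
  | [], _, hR => List.Chain.cons hR List.Chain.nil
  | x :: L', h, hR => by
    obtain ⟨hax, hx⟩ := List.chain_cons.mp h
    exact List.Chain.cons hax (chain_concat hx (by
      have h2 : ((a :: x :: L').getLast (by simp)) = ((x :: L').getLast (by simp)) := by
        simp [List.getLast_cons]
      rwa [h2] at hR))

end Aux

/-- Lemma "dontcare": if `F` has zero indegree in the attack graph of `q`, `r` is a
repair, `A ∈ r` is relevant for `q` in `r`, and `B` is key-equal to `A`, then every
instantiation over `key(F)` true in `(r \ {A}) ∪ {B}` is true in `r`. -/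
theorem dontcare (q : Finset Atom) (hq : SJF q) (F : Atom) (hF : F ∈ q)
    (hind : ∀ G ∈ q, ¬ Attacks q G F)
    (r : Finset DBFact) (hr : ∃ db, Repair db r)
    (A : DBFact) (hA : A ∈ r) (hrel : Relevant A q r)
    (B : DBFact) (hkeq : keyEq A B) :
    ∀ ζ : ℕ → ℕ, Sat (insert B (r.erase A)) q (keyVars F) ζ → Sat r q (keyVars F) ζ := by
  intro ζ hsat
  classical
  obtain ⟨θ, hθζ, hθ⟩ := hsat
  obtain ⟨db, _, hcons, _⟩ := hr
  by_cases hB : ∃ G ∈ q, applyVal θ G = B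
  case neg =>
    refine ⟨θ, hθζ, fun H hH => ?_⟩
    have hm := hθ H hH
    rcases Finset.mem_insert.mp hm with h | h
    · exact absurd ⟨H, hH, h⟩ hB
    · exact Finset.mem_of_mem_erase h
  case pos =>
  obtain ⟨G, hG, hGB⟩ := hB
  obtain ⟨θ₀, ⟨G₀, hG₀, hG₀A⟩, hθ₀⟩ := hrel
  have hrelname : G.rel = G₀.rel := by
    have h1 : (applyVal θ G).rel = G.rel := rfl
    have h2 : (applyVal θ₀ G₀).rel = G₀.rel := rfl
    rw [← h1, ← h2, hGB, hG₀A, hkeq.1]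
  have hGG₀ : G = G₀ := hq G hG G₀ hG₀ hrelname
  subst hGG₀
  have hkeyG : ∀ v ∈ keyVars G, θ v = θ₀ v := by
    apply agree_of_keyEq_applyVal
    rw [hGB, hG₀A]
    exact ⟨hkeq.1.symm, hkeq.2.symm⟩
  have hplus : ∀ x ∈ plus q G, θ x = θ₀ x := by
    intro x hx
    refine hx θ θ₀ ?_ (fun v hv => hkeyG v (by exact_mod_cast hv)) x rfl
    rintro p ⟨H, hHq, rfl⟩ hpk v hv
    have hHne : H ≠ G := Finset.ne_of_mem_erase hHq
    have hHq' : H ∈ q := Finset.mem_of_mem_erase hHq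
    have hkeqH : keyEq (applyVal θ H) (applyVal θ₀ H) :=
      keyEq_applyVal_of_agree (fun u hu => hpk u (by exact_mod_cast hu))
    have hθH : applyVal θ H ∈ insert B (r.erase A) := hθ H hHq'
    have hθHne : applyVal θ H ≠ B := by
      intro hEq
      apply hHne
      apply hq H hHq' G hG
      have hh : (applyVal θ H).rel = (applyVal θ G).rel := by rw [hEq, hGB]
      exact hh
    have hθHr : applyVal θ H ∈ r :=
      Finset.mem_of_mem_erase ((Finset.mem_insert.mp hθH).resolve_left hθHne)
    have heq : applyVal θ H = applyVal θ₀ H :=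
      hcons _ hθHr _ (hθ₀ H hHq') hkeqH
    exact agree_of_applyVal_eq heq v (by exact_mod_cast hv)
  set Reach : Atom → Prop := fun H => ∃ L : List Atom, (∀ X ∈ L, X ∈ q) ∧
    List.Chain (AttackStep q G) G L ∧ (G :: L).getLast (List.cons_ne_nil G L) = H
    with hReach
  have hReachG : Reach G := ⟨[], by simp, List.Chain.nil, rfl⟩
  have hReachStep : ∀ H H', Reach H → H' ∈ q → AttackStep q G H H' → Reach H' := by
    rintro H H' ⟨L, hLq, hch, hlast⟩ hH'q hstep
    refine ⟨L ++ [H'], ?_, chain_concat hch (hlast ▸ hstep), ?_⟩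
    · intro X hX
      rcases List.mem_append.mp hX with h | h
      · exact hLq X h
      · simp_all
    · have hC : G :: (L ++ [H']) = (G :: L) ++ [H'] := by simp
      rw [List.getLast_congr _ (by simp) hC]
      exact List.getLast_concat
  have hkeyFplus : ∀ v ∈ keyVars F, ∀ H, Reach H → v ∈ atomVars H → (v : ℕ) ∈ plus q G := by
    intro v hv H hRH hvH
    by_contra hvp
    have hGF : G ≠ F := by
      intro h; subst h
      exact hvp (keyVars_subset_plus q G v hv)
    obtain ⟨L, hLq, hch, hlast⟩ := hRH
    apply hind G hG
    by_cases hHF : H = F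
    · exact ⟨hGF, hG, L, hLq, hch, hlast.trans hHF⟩
    · refine ⟨hGF, hG, L ++ [F], ?_, chain_concat hch ?_, ?_⟩
      · intro X hX
        rcases List.mem_append.mp hX with h | h
        · exact hLq X h
        · simp_all
      · rw [hlast]
        intro hsub
        apply hvp
        apply hsub
        simp only [Finset.coe_inter, Set.mem_inter_iff, Finset.mem_coe]
        exact ⟨hvH, Finset.mem_union_left _ hv⟩
      · have hC : G :: (L ++ [F]) = (G :: L) ++ [F] := by simp
        rw [List.getLast_congr _ (by simp) hC]
        exact List.getLast_concat
  set θ' : ℕ → ℕ := fun v => if ∃ H, Reach H ∧ v ∈ atomVars H then θ₀ v else θ v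
    with hθ'
  refine ⟨θ', ?_, ?_⟩
  · intro v hv
    by_cases h : ∃ H, Reach H ∧ v ∈ atomVars H
    · obtain ⟨H, hRH, hvH⟩ := h
      have heq : θ v = θ₀ v := hplus v (hkeyFplus v hv H hRH hvH)
      simp only [hθ', if_pos (⟨H, hRH, hvH⟩ : ∃ H, Reach H ∧ v ∈ atomVars H)]
      rw [← heq]; exact hθζ v hv
    · simp only [hθ', if_neg h]
      exact hθζ v hv
  · intro H hH
    by_cases hRH : Reach H
    · have heq : applyVal θ' H = applyVal θ₀ H := by
        apply applyVal_eq_of_agree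
        intro v hv
        simp only [hθ', if_pos (⟨H, hRH, hv⟩ : ∃ H', Reach H' ∧ v ∈ atomVars H')]
      rw [heq]
      exact hθ₀ H hH
    · have hagree : ∀ v ∈ atomVars H, θ' v = θ v := by
        intro v hv
        by_cases h : ∃ H', Reach H' ∧ v ∈ atomVars H'
        · obtain ⟨H', hRH', hvH'⟩ := h
          have hstep : ¬ AttackStep q G H' H := fun hstep =>
            hRH (hReachStep H' H hRH' hH hstep)
          simp only [AttackStep, not_not] at hstep
          have hvplus : (v : ℕ) ∈ plus q G := by
            apply hstep
            simp only [Finset.coe_inter, Set.mem_inter_iff, Finset.mem_coe]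
            exact ⟨hvH', hv⟩
          simp only [hθ', if_pos (⟨H', hRH', hvH'⟩ : ∃ H', Reach H' ∧ v ∈ atomVars H')]
          exact (hplus v hvplus).symm
        · simp only [hθ', if_neg h]
      have heq : applyVal θ' H = applyVal θ H := applyVal_eq_of_agree hagree
      rw [heq]
      have hθH := hθ H hH
      have hθHne : applyVal θ H ≠ B := by
        intro hEq
        apply hRH
        have hHG : H = G := by
          apply hq H hH G hG
          have hh : (applyVal θ H).rel = (applyVal θ G).rel := by rw [hEq, hGB]
          exact hh
        exact hHG ▸ hReachG
      exact Finset.mem_of_mem_erase ((Finset.mem_insert.mp hθH).resolve_left hθHne)
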